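/- Let I ⊆ ℝ be an open interval with 0 ∉ I, let α, β, c ∈ ℂ, and let y, z : I → ℂ be differentiable functions satisfying the P_III system with parameters (α, β, c), with y nonvanishing on I. Then y is twice differentiable on I and satisfies the Painlevé III′ equation y″ = (y′)²/y − y′/s + (y³ + 2β·y²)/s² + 2c(2α+1)/s − 4c²/y. In particular, for c = 1/2 this is the Painlevé III′ equation y″ = (y′)²/y − y′/s + y²(c₃y + c₁)/(4s²) + c₂/(4s) + c₄/(4y) with (c₁, c₂, c₃, c₄) = (8β, 4(2α+1), 4, −4). -/

import Mathlib

/-- The P_III system with parameters `(α, β, c)`. -/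
def PIIIsys (α β c : ℂ) (I : Set ℝ) (y z : ℝ → ℂ) : Prop :=
  ∀ s ∈ I,
    (s : ℂ) * deriv y s
      = 2 * (y s) ^ 2 * z s - (y s) ^ 2 - 2 * α * y s + 2 * c * (s : ℂ) ∧
    (s : ℂ) * deriv z s
      = -2 * y s * (z s) ^ 2 + 2 * y s * z s + 2 * α * z s + β - α

theorem PIII_system_gives_PIII'
    (I : Set ℝ) (hI : IsOpen I) (hI0 : (0 : ℝ) ∉ I)
    (α β c : ℂ) (y z : ℝ → ℂ)
    (hy : DifferentiableOn ℝ y I) (hz : DifferentiableOn ℝ z I)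
    (hsys : PIIIsys α β c I y z)
    (hy0 : ∀ s ∈ I, y s ≠ 0) :
    (∀ s ∈ I, DifferentiableAt ℝ (deriv y) s) ∧
    (∀ s ∈ I, deriv (deriv y) s
      = (deriv y s) ^ 2 / y s - deriv y s / (s : ℂ)
        + ((y s) ^ 3 + 2 * β * (y s) ^ 2) / (s : ℂ) ^ 2
        + 2 * c * (2 * α + 1) / (s : ℂ) - 4 * c ^ 2 / y s) ∧
    (c = 1 / 2 →
      ∀ s ∈ I, deriv (deriv y) s
        = (deriv y s) ^ 2 / y s - deriv y s / (s : ℂ)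
          + (y s) ^ 2 * (4 * y s + 8 * β) / (4 * (s : ℂ) ^ 2)
          + 4 * (2 * α + 1) / (4 * (s : ℂ)) + (-4) / (4 * y s)) := by
  set g : ℝ → ℂ := fun t =>
    (2 * (y t * y t * z t) - y t * y t - (2 * α) * y t + (2 * c) * (t : ℂ)) / (t : ℂ)
    with hg_def
  have key : ∀ s ∈ I, DifferentiableAt ℝ (deriv y) s ∧ deriv (deriv y) s
      = (deriv y s) ^ 2 / y s - deriv y s / (s : ℂ)
        + ((y s) ^ 3 + 2 * β * (y s) ^ 2) / (s : ℂ) ^ 2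
        + 2 * c * (2 * α + 1) / (s : ℂ) - 4 * c ^ 2 / y s := by
    intro s hs
    have hsne : s ≠ 0 := fun h => hI0 (h ▸ hs)
    have hs0 : (s : ℂ) ≠ 0 := by exact_mod_cast hsne
    have hyne : y s ≠ 0 := hy0 s hs
    have hmem : I ∈ nhds s := hI.mem_nhds hs
    have heq : deriv y =ᶠ[nhds s] g := by
      filter_upwards [hmem] with t ht
      have ht0 : (t : ℂ) ≠ 0 := by
        exact_mod_cast (fun h => hI0 (h ▸ ht) : t ≠ 0)
      have E1 := (hsys t ht).1
      show deriv y t = _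
      refine (eq_div_iff ht0).mpr ?_
      rw [mul_comm]
      rw [E1]
      ring
    have hy' : HasDerivAt y (deriv y s) s :=
      ((hy s hs).differentiableAt hmem).hasDerivAt
    have hz' : HasDerivAt z (deriv z s) s :=
      ((hz s hs).differentiableAt hmem).hasDerivAt
    have hre : HasDerivAt (fun t : ℝ => (t : ℂ)) 1 s := by
      simpa using (hasDerivAt_id s).ofReal_comp
    have hnum : HasDerivAt
        (fun t => 2 * (y t * y t * z t) - y t * y t - (2 * α) * y t + (2 * c) * (t : ℂ))
        (2 * ((deriv y s * y s + y s * deriv y s) * z s + (y s * y s) * deriv z s)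
          - (deriv y s * y s + y s * deriv y s) - (2 * α) * deriv y s + (2 * c) * 1) s :=
      ((((hy'.mul hy').mul hz').const_mul 2).sub (hy'.mul hy') |>.sub
        (hy'.const_mul (2 * α))).add (hre.const_mul (2 * c))
    have hg : HasDerivAt g
        (((2 * ((deriv y s * y s + y s * deriv y s) * z s + (y s * y s) * deriv z s)
          - (deriv y s * y s + y s * deriv y s) - (2 * α) * deriv y s + (2 * c) * 1) * (s : ℂ)
          - (2 * (y s * y s * z s) - y s * y s - (2 * α) * y s + (2 * c) * (s : ℂ)) * 1)
          / (s : ℂ) ^ 2) s := hnum.div hre hs0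
    refine ⟨hg.differentiableAt.congr_of_eventuallyEq heq, ?_⟩
    rw [Filter.EventuallyEq.deriv_eq heq, hg.deriv]
    have E1 := (hsys s hs).1
    have E2 := (hsys s hs).2
    have h1 : y s * (s : ℂ) ≠ 0 := mul_ne_zero hyne hs0
    have h2 : y s * (s : ℂ) * (s : ℂ) ^ 2 ≠ 0 := mul_ne_zero h1 (pow_ne_zero 2 hs0)
    have h3 : y s * (s : ℂ) * (s : ℂ) ^ 2 * (s : ℂ) ≠ 0 := mul_ne_zero h2 hs0
    have h4 : y s * (s : ℂ) * (s : ℂ) ^ 2 * (s : ℂ) * y s ≠ 0 := mul_ne_zero h3 hyne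
    rw [div_sub_div _ _ hyne hs0, div_add_div _ _ h1 (pow_ne_zero 2 hs0),
      div_add_div _ _ h2 hs0, div_sub_div _ _ h3 hyne,
      div_eq_div_iff (pow_ne_zero 2 hs0) h4]
    linear_combination ((s : ℂ) ^ 4 * y s
        * (y s - (y s) ^ 2 + 2 * (y s) ^ 2 * z s - 2 * (s : ℂ) * c - (s : ℂ) * deriv y s)) * E1
      + ((s : ℂ) ^ 4 * y s * 2 * (y s) ^ 3) * E2
  refine ⟨fun s hs => (key s hs).1, fun s hs => (key s hs).2, fun hc s hs => ?_⟩
  rw [(key s hs).2, hc]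
  have hsne : s ≠ 0 := fun h => hI0 (h ▸ hs)
  have hs0 : (s : ℂ) ≠ 0 := by exact_mod_cast hsne
  have hyne : y s ≠ 0 := hy0 s hs
  have h4 : (4 : ℂ) ≠ 0 := by norm_num
  rw [show (y s) ^ 2 * (4 * y s + 8 * β) = 4 * ((y s) ^ 3 + 2 * β * (y s) ^ 2) by ring,
    mul_div_mul_left _ _ h4, mul_div_mul_left _ _ h4,
    show ((-4) : ℂ) = 4 * (-1) by norm_num, mul_div_mul_left _ _ h4]
  norm_num
  ring
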